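/- For two k × (n-k) matrices A and B over F_q, the subspace distance between the row spaces of [I_k | A] and [I_k | B] equals 2·rank(A - B). -/

import Mathlib

open Module Matrix

/-- The subspace distance `d_S(U,V) = dim U + dim V - 2 dim (U ⊓ V)`. -/
noncomputable def subspaceDist {F M : Type*} [Field F] [AddCommGroup M] [Module F M]
    (U V : Submodule F M) : ℤ :=
  (finrank F U : ℤ) + (finrank F V : ℤ) - 2 * (finrank F ↥(U ⊓ V) : ℤ)

/-- The row space of the `k × n` matrix `[I_k | A]` (a `k`-dimensional subspace of
`F_q^n`, with `n = k + m` coordinates indexed by `Fin k ⊕ Fin m`). -/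
noncomputable def liftSpan {F : Type*} [Field F] {k m : ℕ}
    (A : Matrix (Fin k) (Fin m) F) : Submodule F ((Fin k ⊕ Fin m) → F) :=
  Submodule.span F (Set.range fun i => Matrix.fromCols (1 : Matrix (Fin k) (Fin k) F) A i)

lemma liftSpan_eq_range {F : Type*} [Field F] {k m : ℕ} (A : Matrix (Fin k) (Fin m) F) :
    liftSpan A =
      LinearMap.range (Matrix.fromCols (1 : Matrix (Fin k) (Fin k) F) A).vecMulLinear := by
  rw [range_vecMulLinear]; rfl

lemma vecMul_fromCols {F : Type*} [Field F] {k m : ℕ} (A : Matrix (Fin k) (Fin m) F)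
    (x : Fin k → F) :
    x ᵥ* Matrix.fromCols (1 : Matrix (Fin k) (Fin k) F) A = Sum.elim x (x ᵥ* A) := by
  rw [Matrix.vecMul_fromCols, Matrix.vecMul_one]

lemma fromCols_inj {F : Type*} [Field F] {k m : ℕ} (A : Matrix (Fin k) (Fin m) F) :
    Function.Injective (Matrix.fromCols (1 : Matrix (Fin k) (Fin k) F) A).vecMulLinear := by
  intro x y h
  simp only [Matrix.vecMulLinear_apply, _root_.vecMul_fromCols] at h
  funext i
  exact congrFun h (Sum.inl i)

lemma inf_eq_map {F : Type*} [Field F] {k m : ℕ} (A B : Matrix (Fin k) (Fin m) F) :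
    liftSpan A ⊓ liftSpan B =
      (LinearMap.ker (A - B).vecMulLinear).map
        (Matrix.fromCols (1 : Matrix (Fin k) (Fin k) F) A).vecMulLinear := by
  rw [liftSpan_eq_range, liftSpan_eq_range]
  ext u
  simp only [Submodule.mem_inf, LinearMap.mem_range, Submodule.mem_map, LinearMap.mem_ker,
    Matrix.vecMulLinear_apply, _root_.vecMul_fromCols]
  constructor
  · rintro ⟨⟨x, rfl⟩, ⟨y, hy⟩⟩
    have hxy : y = x := funext fun i => congrFun hy (Sum.inl i)
    subst hxy
    have h2 : y ᵥ* B = y ᵥ* A := funext fun j => congrFun hy (Sum.inr j)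
    exact ⟨y, by rw [Matrix.vecMul_sub, h2, sub_self], rfl⟩
  · rintro ⟨x, hx, rfl⟩
    refine ⟨⟨x, rfl⟩, ⟨x, ?_⟩⟩
    have h0 : x ᵥ* A - x ᵥ* B = 0 := by rw [← Matrix.vecMul_sub]; exact hx
    rw [sub_eq_zero.mp h0]

/-- For two `k × (n-k)` matrices `A` and `B` over `F_q`, the subspace distance between
the row spaces of `[I_k | A]` and `[I_k | B]` equals `2 · rank (A - B)`. -/
theorem subspaceDist_liftSpan (F : Type*) [Field F] [Fintype F] (k m : ℕ)
    (A B : Matrix (Fin k) (Fin m) F) :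
    subspaceDist (liftSpan A) (liftSpan B) = 2 * ((A - B).rank : ℤ) := by
  have hA : finrank F (liftSpan A) = k := by
    rw [liftSpan_eq_range, LinearMap.finrank_range_of_inj (fromCols_inj A)]
    simp
  have hB : finrank F (liftSpan B) = k := by
    rw [liftSpan_eq_range, LinearMap.finrank_range_of_inj (fromCols_inj B)]
    simp
  have hrank : (A - B).rank = finrank F (LinearMap.range (A - B).vecMulLinear) := by
    rw [← Matrix.rank_transpose (A - B), ← Matrix.mulVecLin_transpose]
    rfl
  have hker : finrank F (LinearMap.ker (A - B).vecMulLinear) + (A - B).rank = k := by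
    have h := LinearMap.finrank_range_add_finrank_ker ((A - B).vecMulLinear)
    simp only [Module.finrank_pi, Fintype.card_fin] at h
    rw [hrank]
    omega
  have hinf : finrank F ↥(liftSpan A ⊓ liftSpan B)
      = finrank F (LinearMap.ker (A - B).vecMulLinear) := by
    rw [inf_eq_map A B]
    exact (LinearEquiv.finrank_eq
      (Submodule.equivMapOfInjective _ (fromCols_inj A) _)).symm
  unfold subspaceDist
  rw [hA, hB, hinf]
  have := hker
  push_cast [← this]
  ring
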